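/- For μ and ν idempotent probability measures on compact Hausdorff spaces X and Y respectively, the assignment (⊕ᵢ φᵢ ⊙ ψᵢ) ↦ maxᵢ (μ(φᵢ) + ν(ψᵢ)) is well-defined and satisfies normality, max-plus homogeneity, and max-additivity on the set C₀ of functions of the form (x,y) ↦ maxᵢ (φᵢ(x) + ψᵢ(y)) with φᵢ ∈ C(X,ℝ), ψᵢ ∈ C(Y,ℝ). -/

import Mathlib

open scoped BigOperators

/-- An idempotent probability measure: normality on constants, max-plus homogeneity
(addition of constants), and max-additivity (pointwise max ↦ max). -/
def IsIdemProb {X : Type*} [TopologicalSpace X] (μ : C(X, ℝ) → ℝ) : Prop :=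
  (∀ c : ℝ, μ (ContinuousMap.const X c) = c) ∧
  (∀ (c : ℝ) (φ : C(X, ℝ)), μ (ContinuousMap.const X c + φ) = c + μ φ) ∧
  (∀ φ ψ : C(X, ℝ), μ (φ ⊔ ψ) = max (μ φ) (μ ψ))

/-- `⨆` over a nonempty finite type equals `Finset.sup'` over `univ`. -/
lemma ciSup_eq_sup'_univ {ι : Type*} [Fintype ι] [Nonempty ι] (f : ι → ℝ) :
    (⨆ i, f i) = Finset.univ.sup' Finset.univ_nonempty f := by
  apply le_antisymm
  · exact ciSup_le fun i => Finset.le_sup' f (Finset.mem_univ i)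
  · exact Finset.sup'_le _ _ fun i _ =>
      le_ciSup (Set.Finite.bddAbove (Set.finite_range f)) i

lemma IsIdemProb.mono {X : Type*} [TopologicalSpace X] {μ : C(X, ℝ) → ℝ}
    (hμ : IsIdemProb μ) {f g : C(X, ℝ)} (h : f ≤ g) : μ f ≤ μ g := by
  have h2 := hμ.2.2 f g
  rw [sup_eq_right.2 h] at h2
  rw [h2]; exact le_max_left _ _

lemma IsIdemProb.map_sup' {X : Type*} [TopologicalSpace X] {μ : C(X, ℝ) → ℝ}
    (hμ : IsIdemProb μ) {ι : Type*} (s : Finset ι) (hs : s.Nonempty)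
    (f : ι → C(X, ℝ)) : μ (s.sup' hs f) = s.sup' hs (fun i => μ (f i)) :=
  Finset.comp_sup'_eq_sup'_comp hs μ hμ.2.2

/-- Core one-sided estimate. -/
lemma tensor_key {X Y : Type*} [TopologicalSpace X] [TopologicalSpace Y]
    {μ : C(X, ℝ) → ℝ} {ν : C(Y, ℝ) → ℝ} (hμ : IsIdemProb μ) (hν : IsIdemProb ν)
    {m : ℕ} (hm : 0 < m) (φ : C(X, ℝ)) (ψ : C(Y, ℝ))
    (φ' : Fin m → C(X, ℝ)) (ψ' : Fin m → C(Y, ℝ))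
    (h : ∀ (x : X) (y : Y), φ x + ψ y ≤ ⨆ j, (φ' j x + ψ' j y)) :
    μ φ + ν ψ ≤ ⨆ j, (μ (φ' j) + ν (ψ' j)) := by
  haveI : Nonempty (Fin m) := ⟨⟨0, hm⟩⟩
  -- Step 1: for each y, μ φ + ψ y ≤ sup'_j (μ (φ' j) + ψ' j y)
  have step1 : ∀ y : Y, μ φ + ψ y ≤
      Finset.univ.sup' Finset.univ_nonempty (fun j => μ (φ' j) + ψ' j y) := by
    intro y
    have hle : (ContinuousMap.const X (ψ y) + φ) ≤
        Finset.univ.sup' Finset.univ_nonempty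
          (fun j => ContinuousMap.const X (ψ' j y) + φ' j) := by
      rw [ContinuousMap.le_def]
      intro x
      have hx := h x y
      rw [ciSup_eq_sup'_univ] at hx
      simp only [ContinuousMap.sup'_apply, ContinuousMap.add_apply,
        ContinuousMap.const_apply]
      rw [Finset.le_sup'_iff] at hx ⊢
      obtain ⟨j, hj, hj2⟩ := hx
      refine ⟨j, hj, ?_⟩
      linarith
    have h1 := hμ.mono hle
    rw [hμ.2.1, hμ.map_sup'] at h1
    simp only [hμ.2.1] at h1
    rw [Finset.le_sup'_iff] at h1 ⊢
    obtain ⟨j, hj, hj2⟩ := h1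
    exact ⟨j, hj, by linarith⟩
  -- Step 2: ψ ≤ sup'_j (const (μ (φ' j) - μ φ) + ψ' j)
  have hle2 : ψ ≤ Finset.univ.sup' Finset.univ_nonempty
      (fun j => ContinuousMap.const Y (μ (φ' j) - μ φ) + ψ' j) := by
    rw [ContinuousMap.le_def]
    intro y
    have h1 := step1 y
    rw [Finset.le_sup'_iff] at h1
    obtain ⟨j, hj, hj2⟩ := h1
    simp only [ContinuousMap.sup'_apply, ContinuousMap.add_apply,
      ContinuousMap.const_apply]
    rw [Finset.le_sup'_iff]
    exact ⟨j, hj, by linarith⟩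
  have h2 := hν.mono hle2
  rw [hν.map_sup'] at h2
  simp only [hν.2.1] at h2
  rw [ciSup_eq_sup'_univ, Finset.le_sup'_iff]
  rw [Finset.le_sup'_iff] at h2
  obtain ⟨j, hj, hj2⟩ := h2
  exact ⟨j, hj, by linarith⟩

theorem tensor_wellDefined_isIdemProb_on_C0 {X Y : Type*}
    [TopologicalSpace X] [CompactSpace X] [T2Space X]
    [TopologicalSpace Y] [CompactSpace Y] [T2Space Y]
    (μ : C(X, ℝ) → ℝ) (ν : C(Y, ℝ) → ℝ) (hμ : IsIdemProb μ) (hν : IsIdemProb ν) :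
    -- well-definedness
    (∀ (n m : ℕ), 0 < n → 0 < m →
      ∀ (φ : Fin n → C(X, ℝ)) (ψ : Fin n → C(Y, ℝ))
        (φ' : Fin m → C(X, ℝ)) (ψ' : Fin m → C(Y, ℝ)),
      (∀ (x : X) (y : Y), (⨆ i, (φ i x + ψ i y)) = ⨆ j, (φ' j x + ψ' j y)) →
      (⨆ i, (μ (φ i) + ν (ψ i))) = ⨆ j, (μ (φ' j) + ν (ψ' j))) ∧
    -- normality: any representation of the constant function c is sent to c
    (∀ (c : ℝ) (n : ℕ), 0 < n →
      ∀ (φ : Fin n → C(X, ℝ)) (ψ : Fin n → C(Y, ℝ)),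
      (∀ (x : X) (y : Y), (⨆ i, (φ i x + ψ i y)) = c) →
      (⨆ i, (μ (φ i) + ν (ψ i))) = c) ∧
    -- max-plus homogeneity
    (∀ (c : ℝ) (n : ℕ), 0 < n →
      ∀ (φ : Fin n → C(X, ℝ)) (ψ : Fin n → C(Y, ℝ)),
      (⨆ i, (μ (ContinuousMap.const X c + φ i) + ν (ψ i))) =
        c + ⨆ i, (μ (φ i) + ν (ψ i))) ∧
    -- max-additivity: value on a concatenation is the max of the values
    (∀ (n m : ℕ), 0 < n → 0 < m →
      ∀ (φ : Fin n → C(X, ℝ)) (ψ : Fin n → C(Y, ℝ))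
        (φ' : Fin m → C(X, ℝ)) (ψ' : Fin m → C(Y, ℝ)),
      (⨆ k : Fin n ⊕ Fin m, (μ (Sum.elim φ φ' k) + ν (Sum.elim ψ ψ' k))) =
        max (⨆ i, (μ (φ i) + ν (ψ i))) (⨆ j, (μ (φ' j) + ν (ψ' j)))) := by
  have wd : ∀ (n m : ℕ), 0 < n → 0 < m →
      ∀ (φ : Fin n → C(X, ℝ)) (ψ : Fin n → C(Y, ℝ))
        (φ' : Fin m → C(X, ℝ)) (ψ' : Fin m → C(Y, ℝ)),
      (∀ (x : X) (y : Y), (⨆ i, (φ i x + ψ i y)) = ⨆ j, (φ' j x + ψ' j y)) →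
      (⨆ i, (μ (φ i) + ν (ψ i))) = ⨆ j, (μ (φ' j) + ν (ψ' j)) := by
    intro n m hn hm φ ψ φ' ψ' heq
    haveI : Nonempty (Fin n) := ⟨⟨0, hn⟩⟩
    haveI : Nonempty (Fin m) := ⟨⟨0, hm⟩⟩
    apply le_antisymm
    · apply ciSup_le
      intro i
      apply tensor_key hμ hν hm
      intro x y
      rw [← heq x y]
      exact le_ciSup (f := fun i => (φ i) x + (ψ i) y)
        (Set.Finite.bddAbove (Set.finite_range _)) i
    · apply ciSup_le
      intro j
      apply tensor_key hμ hν hn (φ' j) (ψ' j) φ ψ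
      intro x y
      rw [heq x y]
      exact le_ciSup (f := fun j => (φ' j) x + (ψ' j) y)
        (Set.Finite.bddAbove (Set.finite_range _)) j
  refine ⟨wd, ?_, ?_, ?_⟩
  · -- normality
    intro c n hn φ ψ hconst
    haveI : Nonempty (Fin n) := ⟨⟨0, hn⟩⟩
    have h1 := wd n 1 hn one_pos φ ψ (fun _ => ContinuousMap.const X c)
      (fun _ => ContinuousMap.const Y 0) ?_
    · rw [h1]
      have : (⨆ _ : Fin 1, (μ (ContinuousMap.const X c) + ν (ContinuousMap.const Y 0))) = c := by
        rw [ciSup_const, hμ.1, hν.1, add_zero]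
      rw [this]
    · intro x y
      rw [hconst x y]
      have : (⨆ _ : Fin 1, ((ContinuousMap.const X c) x + (ContinuousMap.const Y 0) y)) = c := by
        rw [ciSup_const]; simp
      rw [this]
  · -- homogeneity
    intro c n hn φ ψ
    haveI : Nonempty (Fin n) := ⟨⟨0, hn⟩⟩
    have e1 : ∀ i : Fin n, μ (ContinuousMap.const X c + φ i) + ν (ψ i)
        = c + (μ (φ i) + ν (ψ i)) := by
      intro i; rw [hμ.2.1]; ring
    simp only [e1]
    rw [ciSup_eq_sup'_univ, ciSup_eq_sup'_univ (fun i => μ (φ i) + ν (ψ i))]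
    exact (Finset.comp_sup'_eq_sup'_comp Finset.univ_nonempty (fun a => c + a)
      (fun x y => add_sup x y c)).symm
  · -- max-additivity
    intro n m hn hm φ ψ φ' ψ'
    haveI : Nonempty (Fin n) := ⟨⟨0, hn⟩⟩
    haveI : Nonempty (Fin m) := ⟨⟨0, hm⟩⟩
    set f : Fin n ⊕ Fin m → ℝ := fun k => μ (Sum.elim φ φ' k) + ν (Sum.elim ψ ψ' k)
    have bf : BddAbove (Set.range f) := Set.Finite.bddAbove (Set.finite_range f)
    apply le_antisymm
    · apply ciSup_le
      rintro (i | j)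
      · exact le_max_of_le_left (le_ciSup (f := fun i => μ (φ i) + ν (ψ i))
          (Set.Finite.bddAbove (Set.finite_range _)) i)
      · exact le_max_of_le_right (le_ciSup (f := fun j => μ (φ' j) + ν (ψ' j))
          (Set.Finite.bddAbove (Set.finite_range _)) j)
    · apply max_le
      · exact ciSup_le fun i => le_ciSup bf (Sum.inl i)
      · exact ciSup_le fun j => le_ciSup bf (Sum.inr j)
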